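/- Let ν be the involutive automorphism of lie_2 with ν(x) = −x−y, ν(y) = y. For any E_{a,b} ∈ sder_2, the conjugate ν ∘ E_{a,b} ∘ ν equals the Ihara derivation d_{ν(b)} (defined by x ↦ 0, y ↦ [y, ν(b)]), and d_{ν(b)}(−x−y) = [−x−y, ν(a)], so d_{ν(b)} ∈ ider_2. The resulting map E_{a,b} ↦ d_{ν(b)} is an isomorphism of Lie algebras sder_2 → ider_2 (both with the commutator bracket of derivations). -/

import Mathlib

noncomputable section

attribute [local instance 100] LieRing.ofAssociativeRing

abbrev Ass2 : Type := MonoidAlgebra ℚ (FreeMonoid (Fin 2))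

def mono (w : List (Fin 2)) : Ass2 := MonoidAlgebra.single (FreeMonoid.ofList w) 1

def Xg : Ass2 := mono [0]
def Yg : Ass2 := mono [1]

def coeffW (f : Ass2) (w : List (Fin 2)) : ℚ :=
  (f.coeff : FreeMonoid (Fin 2) →₀ ℚ) (FreeMonoid.ofList w)

def suppW (f : Ass2) : Finset (FreeMonoid (Fin 2)) :=
  (f.coeff : FreeMonoid (Fin 2) →₀ ℚ).support

def pushWord (w : List (Fin 2)) : List (Fin 2) :=
  if (1 : Fin 2) ∈ w then
    (w.reverse.takeWhile (· ≠ 1)).reverse ++ [1] ++ ((w.reverse.dropWhile (· ≠ 1)).tail).reverse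
  else w

def pushA (f : Ass2) : Ass2 :=
  MonoidAlgebra.ofCoeff (Finsupp.mapDomain (fun w => FreeMonoid.ofList (pushWord (FreeMonoid.toList w)))
    (f.coeff : FreeMonoid (Fin 2) →₀ ℚ))

def depthPart (r : ℕ) (f : Ass2) : Ass2 :=
  MonoidAlgebra.ofCoeff (Finsupp.filter (fun w => (FreeMonoid.toList w).count 1 = r) (f.coeff : FreeMonoid (Fin 2) →₀ ℚ))

def homogW (n : ℕ) (f : Ass2) : Prop := ∀ w ∈ suppW f, (FreeMonoid.toList w).length = n

def lie2 : LieSubalgebra ℚ Ass2 := LieSubalgebra.lieSpan ℚ Ass2 {Xg, Yg}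

def Cgen : ℕ → Ass2
  | 0 => Yg
  | i + 1 => ⁅Xg, Cgen i⁆

def lieC : LieSubalgebra ℚ Ass2 := LieSubalgebra.lieSpan ℚ Ass2 (Set.range Cgen)

/-- `rY f` is `f_y` : the part of `f` consisting of words ending in `y`, with that `y` removed. -/
def rY (f : Ass2) : Ass2 :=
  MonoidAlgebra.ofCoeff (Finsupp.comapDomain (fun w => w * FreeMonoid.of 1) (f.coeff : FreeMonoid (Fin 2) →₀ ℚ)
    (Set.injOn_of_injective (mul_left_injective (FreeMonoid.of 1))))

def rX (f : Ass2) : Ass2 :=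
  MonoidAlgebra.ofCoeff (Finsupp.comapDomain (fun w => w * FreeMonoid.of 0) (f.coeff : FreeMonoid (Fin 2) →₀ ℚ)
    (Set.injOn_of_injective (mul_left_injective (FreeMonoid.of 0))))

/-- `lY f` is `f^y`. -/
def lY (f : Ass2) : Ass2 :=
  MonoidAlgebra.ofCoeff (Finsupp.comapDomain (fun w => FreeMonoid.of 1 * w) (f.coeff : FreeMonoid (Fin 2) →₀ ℚ)
    (Set.injOn_of_injective (mul_right_injective (FreeMonoid.of 1))))

def lX (f : Ass2) : Ass2 :=
  MonoidAlgebra.ofCoeff (Finsupp.comapDomain (fun w => FreeMonoid.of 0 * w) (f.coeff : FreeMonoid (Fin 2) →₀ ℚ)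
    (Set.injOn_of_injective (mul_right_injective (FreeMonoid.of 0))))

/-- sum of all monomials of weight `n` and depth `r` -/
def allMon (n r : ℕ) : Ass2 :=
  ∑ g ∈ Finset.univ.filter (fun g : Fin n → Fin 2 => (List.ofFn g).count 1 = r),
    mono (List.ofFn g)

def PushNeutral (p : Ass2) : Prop :=
  ∀ r : ℕ, 1 ≤ r → ∑ i ∈ Finset.range (r + 1), pushA^[i] (depthPart r p) = 0

def CircNeutral (b : Ass2) : Prop :=
  ∀ r : ℕ, 1 < r → ∑ i ∈ Finset.range (r + 1), pushA^[i] (depthPart r (lY b)) = 0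

def PushConstant (p : Ass2) (n : ℕ) (c : ℚ) : Prop :=
  coeffW p (List.replicate n 1) = 0 ∧
    ∀ r : ℕ, 1 < r → r < n →
      ∑ i ∈ Finset.range (r + 1), pushA^[i] (depthPart r p) = c • allMon n r

def cycSub : Submodule ℚ Ass2 :=
  Submodule.span ℚ {p : Ass2 | ∃ (w : List (Fin 2)) (k : ℕ), p = mono w - mono (w.rotate k)}

abbrev Tr2 := Ass2 ⧸ cycSub

def trQ : Ass2 →ₗ[ℚ] Tr2 := cycSub.mkQ

def derFun (vx vy : Ass2) : List (Fin 2) → Ass2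
  | [] => 0
  | a :: w => (if a = 0 then vx else vy) * mono w + mono [a] * derFun vx vy w

/-- the derivation of `Ass2` with `x ↦ vx`, `y ↦ vy`, applied to `f`. -/
def der (vx vy : Ass2) (f : Ass2) : Ass2 :=
  Finsupp.sum (f.coeff : FreeMonoid (Fin 2) →₀ ℚ) (fun w c => c • derFun vx vy (FreeMonoid.toList w))

/-- the tangential derivation `E_{a,b}` with `x ↦ [x,a]`, `y ↦ [y,b]`. -/
def Eder (a b : Ass2) : Ass2 → Ass2 := der ⁅Xg, a⁆ ⁅Yg, b⁆

/-- the automorphism `ν` of `Ass2` with `ν(x) = −x−y`, `ν(y) = y`. -/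
def nuA : Ass2 → Ass2 :=
  MonoidAlgebra.lift ℚ Ass2 (FreeMonoid (Fin 2))
    (FreeMonoid.lift (fun i : Fin 2 => if i = 0 then (-Xg - Yg) else Yg))

/-- the Ihara derivation `d_c` : `x ↦ 0`, `y ↦ [y,c]`, applied to `f`. -/
def dIhara (c : Ass2) : Ass2 → Ass2 := der 0 ⁅Yg, c⁆

lemma mono_nil : mono [] = 1 := rfl

lemma mono_append (u v : List (Fin 2)) : mono (u ++ v) = mono u * mono v := by
  simp [mono, MonoidAlgebra.single_mul_single]

lemma mono_cons (a : Fin 2) (u : List (Fin 2)) : mono (a :: u) = mono [a] * mono u := by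
  rw [← mono_append]; rfl

lemma der_zero (vx vy : Ass2) : der vx vy 0 = 0 := by
  simp [der]

lemma der_add (vx vy f g : Ass2) : der vx vy (f + g) = der vx vy f + der vx vy g := by
  unfold der
  rw [MonoidAlgebra.coeff_add]
  exact Finsupp.sum_add_index' (by simp) (by intros; rw [add_smul])

lemma der_smul (vx vy : Ass2) (c : ℚ) (f : Ass2) : der vx vy (c • f) = c • der vx vy f := by
  unfold der
  rw [MonoidAlgebra.coeff_smul, Finsupp.sum_smul_index (by simp), Finsupp.smul_sum]
  simp [mul_smul]

lemma der_mono (vx vy : Ass2) (w : List (Fin 2)) : der vx vy (mono w) = derFun vx vy w := by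
  unfold der mono
  rw [MonoidAlgebra.coeff_single, Finsupp.sum_single_index (by simp)]
  simp

lemma derFun_append (vx vy : Ass2) (u v : List (Fin 2)) :
    derFun vx vy (u ++ v) = derFun vx vy u * mono v + mono u * derFun vx vy v := by
  induction u with
  | nil => simp [derFun, mono_nil]
  | cons a u ih =>
      simp only [List.cons_append, derFun, List.append_eq]
      rw [ih, mono_append, mono_cons a u]
      noncomm_ring

lemma of_eq_mono (m : FreeMonoid (Fin 2)) :
    MonoidAlgebra.of ℚ (FreeMonoid (Fin 2)) m = mono (FreeMonoid.toList m) := by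
  simp [MonoidAlgebra.of_apply, mono]

lemma der_mul (vx vy f g : Ass2) :
    der vx vy (f * g) = der vx vy f * g + f * der vx vy g := by
  induction f using MonoidAlgebra.induction_on with
  | add f f' hf hf' => rw [add_mul, der_add, hf, hf', der_add]; noncomm_ring
  | smul c f hf => rw [smul_mul_assoc, der_smul, der_smul, hf]; simp [smul_add, smul_mul_assoc, mul_smul_comm]
  | of u =>
      rw [of_eq_mono]
      induction g using MonoidAlgebra.induction_on with
      | add g g' hg hg' => rw [mul_add, der_add, hg, hg', der_add]; noncomm_ring
      | smul c g hg => rw [mul_smul_comm, der_smul, der_smul, hg]; simp [smul_add, smul_mul_assoc, mul_smul_comm]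
      | of v =>
          rw [of_eq_mono, ← mono_append, der_mono, der_mono, der_mono, derFun_append]

lemma der_neg (vx vy f : Ass2) : der vx vy (-f) = - der vx vy f := by
  have := der_smul vx vy (-1) f; simpa using this

lemma der_sub (vx vy f g : Ass2) : der vx vy (f - g) = der vx vy f - der vx vy g := by
  rw [sub_eq_add_neg, der_add, der_neg, sub_eq_add_neg]

def nuAlg : Ass2 →ₐ[ℚ] Ass2 :=
  MonoidAlgebra.lift ℚ Ass2 (FreeMonoid (Fin 2))
    (FreeMonoid.lift (fun i : Fin 2 => if i = 0 then (-Xg - Yg) else Yg))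

lemma nuA_eq : nuA = ⇑nuAlg := rfl

lemma nu_X : nuA Xg = -Xg - Yg := by
  rw [nuA_eq]
  show nuAlg (MonoidAlgebra.single (FreeMonoid.of 0) 1) = -Xg - Yg
  simp [nuAlg, MonoidAlgebra.lift_single]

lemma nu_Y : nuA Yg = Yg := by
  rw [nuA_eq]
  show nuAlg (MonoidAlgebra.single (FreeMonoid.of 1) 1) = Yg
  simp [nuAlg, MonoidAlgebra.lift_single]

lemma nu_nu (f : Ass2) : nuA (nuA f) = f := by
  rw [nuA_eq]
  induction f using MonoidAlgebra.induction_on with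
  | add f g hf hg => rw [map_add, map_add, hf, hg]
  | smul c f hf => rw [map_smul, map_smul, hf]
  | of m =>
      rw [of_eq_mono]
      induction (FreeMonoid.toList m) with
      | nil => rw [mono_nil, map_one, map_one]
      | cons a w ih =>
          rw [mono_cons, map_mul, map_mul, ih]
          congr 1
          fin_cases a
          · show nuAlg (nuAlg Xg) = Xg
            rw [← nuA_eq, nu_X, nuA_eq, map_sub, map_neg, ← nuA_eq, nu_X, nu_Y]
            abel
          · show nuAlg (nuAlg Yg) = Yg
            rw [← nuA_eq, nu_Y, nu_Y]

lemma der_X (vx vy : Ass2) : der vx vy Xg = vx := by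
  show der vx vy (mono [0]) = vx
  rw [der_mono]
  simp [derFun, mono_nil]

lemma der_Y (vx vy : Ass2) : der vx vy Yg = vy := by
  show der vx vy (mono [1]) = vy
  rw [der_mono]
  simp [derFun, mono_nil]

lemma nu_bracket (f g : Ass2) : nuA ⁅f, g⁆ = ⁅nuA f, nuA g⁆ := by
  rw [Ring.lie_def, Ring.lie_def, nuA_eq, map_sub, map_mul, map_mul]

lemma derivation_ext {D1 D2 : Ass2 → Ass2}
    (h1a : ∀ f g, D1 (f + g) = D1 f + D1 g) (h1s : ∀ (c : ℚ) f, D1 (c • f) = c • D1 f)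
    (h1m : ∀ f g, D1 (f * g) = D1 f * g + f * D1 g)
    (h2a : ∀ f g, D2 (f + g) = D2 f + D2 g) (h2s : ∀ (c : ℚ) f, D2 (c • f) = c • D2 f)
    (h2m : ∀ f g, D2 (f * g) = D2 f * g + f * D2 g)
    (hX : D1 Xg = D2 Xg) (hY : D1 Yg = D2 Yg) (f : Ass2) : D1 f = D2 f := by
  have h1one : D1 1 = 0 := by
    have h := h1m 1 1
    simp only [one_mul, mul_one] at h
    exact (left_eq_add.mp h)
  have h2one : D2 1 = 0 := by
    have h := h2m 1 1
    simp only [one_mul, mul_one] at h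
    exact (left_eq_add.mp h)
  have hmono : ∀ w : List (Fin 2), D1 (mono w) = D2 (mono w) := by
    intro w
    induction w with
    | nil => rw [mono_nil, h1one, h2one]
    | cons a w ih =>
        rw [mono_cons, h1m, h2m, ih]
        have ha : D1 (mono [a]) = D2 (mono [a]) := by
          fin_cases a
          · exact hX
          · exact hY
        rw [ha]
  induction f using MonoidAlgebra.induction_on with
  | of m => rw [of_eq_mono]; exact hmono _
  | add f g hf hg => rw [h1a, h2a, hf, hg]
  | smul c f hf => rw [h1s, h2s, hf]

/-- **Statement 15** (Lemma 18 of the paper).  For `E_{a,b} ∈ sder_2`, conjugation by the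
involution `ν` (`x ↦ −x−y`, `y ↦ y`) gives the Ihara derivation `d_{ν(b)}`, one has
`d_{ν(b)}(−x−y) = [−x−y, ν(a)]` (so `d_{ν(b)} ∈ ider_2`), and `E_{a,b} ↦ d_{ν(b)}`
is an isomorphism of Lie algebras `sder_2 → ider_2`: it respects the commutator bracket. -/
theorem conjugation_by_nu (a b : Ass2) (ha : a ∈ lie2) (hb : b ∈ lie2)
    (hsp : ⁅Xg, a⁆ + ⁅Yg, b⁆ = 0) :
    (∀ f : Ass2, nuA (Eder a b (nuA f)) = dIhara (nuA b) f) ∧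
    dIhara (nuA b) (-Xg - Yg) = ⁅-Xg - Yg, nuA a⁆ ∧
    (∀ a' b' : Ass2, a' ∈ lie2 → b' ∈ lie2 → ⁅Xg, a'⁆ + ⁅Yg, b'⁆ = 0 →
      ∀ f : Ass2,
        nuA (Eder a b (Eder a' b' (nuA f)) - Eder a' b' (Eder a b (nuA f)))
          = dIhara (nuA b) (dIhara (nuA b') f) - dIhara (nuA b') (dIhara (nuA b) f)) := by
  
  have key : ∀ (a b : Ass2), ⁅Xg, a⁆ + ⁅Yg, b⁆ = 0 →
      ∀ f : Ass2, nuA (Eder a b (nuA f)) = dIhara (nuA b) f := by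
    intro a b hsp f
    refine derivation_ext (D1 := fun f => nuA (Eder a b (nuA f))) (D2 := dIhara (nuA b))
      ?_ ?_ ?_ ?_ ?_ ?_ ?_ ?_ f
    · intro f g
      show nuA (der _ _ (nuA (f + g))) = nuA (der _ _ (nuA f)) + nuA (der _ _ (nuA g))
      rw [nuA_eq, map_add, der_add, map_add]
    · intro c f
      show nuA (der _ _ (nuA (c • f))) = c • nuA (der _ _ (nuA f))
      rw [nuA_eq, map_smul, der_smul, map_smul]
    · intro f g
      show nuA (der _ _ (nuA (f * g)))
          = nuA (der _ _ (nuA f)) * g + f * nuA (der _ _ (nuA g))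
      rw [nuA_eq, map_mul, der_mul, map_add, map_mul, map_mul, ← nuA_eq, nu_nu, nu_nu]
    · intro f g; exact der_add _ _ f g
    · intro c f; exact der_smul _ _ c f
    · intro f g; exact der_mul _ _ f g
    · show nuA (Eder a b (nuA Xg)) = dIhara (nuA b) Xg
      rw [nu_X]
      show nuA (der _ _ (-Xg - Yg)) = der 0 _ Xg
      rw [der_sub, der_neg, der_X, der_Y, der_X]
      rw [show -⁅Xg, a⁆ - ⁅Yg, b⁆ = -(⁅Xg, a⁆ + ⁅Yg, b⁆) by abel, hsp, neg_zero,
        nuA_eq, map_zero]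
    · show nuA (Eder a b (nuA Yg)) = dIhara (nuA b) Yg
      rw [nu_Y]
      show nuA (der _ _ Yg) = der 0 _ Yg
      rw [der_Y, der_Y, nu_bracket, nu_Y]
  have part2 : dIhara (nuA b) (-Xg - Yg) = ⁅-Xg - Yg, nuA a⁆ := by
    have h := congrArg nuA hsp
    rw [nuA_eq, map_add, map_zero, ← nuA_eq, nu_bracket, nu_bracket, nu_X, nu_Y] at h
    show der 0 _ (-Xg - Yg) = _
    rw [der_sub, der_neg, der_X, der_Y, neg_zero, zero_sub]
    exact neg_eq_of_add_eq_zero_left h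
  refine ⟨key a b hsp, part2, ?_⟩
  intro a' b' _ _ hsp' f
  have e1 : Eder a' b' (nuA f) = nuA (dIhara (nuA b') f) := by
    rw [← key a' b' hsp' f, nu_nu]
  have e2 : Eder a b (nuA f) = nuA (dIhara (nuA b) f) := by
    rw [← key a b hsp f, nu_nu]
  rw [nuA_eq, map_sub, ← nuA_eq, e1, e2, key a b hsp, key a' b' hsp']
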